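/- Let Γ be a strongly regular graph with parameters (n,k,λ,μ) and let (x,y) be a 3-isoregular edge of Γ with associated parameters Q, R, W. Then λμ(k-2λ+Q) = W(k-μ)(k-λ-1). -/

import Mathlib

open Finset

variable {V : Type*}

/-- The number of common neighbors of the three vertices `x, y, z` in `G`. -/
def commonValency [Fintype V] [DecidableEq V] (G : SimpleGraph V)
    [DecidableRel G.Adj] (x y z : V) : ℕ :=
  (G.neighborFinset x ∩ G.neighborFinset y ∩ G.neighborFinset z).card

/-- `(x,y)` is a 3-isoregular edge of `G` with associated parameters `Q, R, W`:
the number of common neighbors of `{x,y,z}` equals `Q`, `R` or `W` according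
to whether the induced subgraph on `{x,y,z}` is `K₃`, `K_{1,2}` or `K₂ + K₁`. -/
def IsoregEdgeWith [Fintype V] [DecidableEq V] (G : SimpleGraph V)
    [DecidableRel G.Adj] (x y : V) (Q R W : ℕ) : Prop :=
  G.Adj x y ∧
  (∀ z, z ≠ x → z ≠ y → G.Adj z x → G.Adj z y → commonValency G x y z = Q) ∧
  (∀ z, z ≠ x → z ≠ y → Xor' (G.Adj z x) (G.Adj z y) → commonValency G x y z = R) ∧
  (∀ z, z ≠ x → z ≠ y → ¬ G.Adj z x → ¬ G.Adj z y → commonValency G x y z = W)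

/-- `(x,z)` is a 3-isoregular non-edge of `G` with associated parameters
`R', W', V'`: the number of common neighbors of `{x,z,u}` equals `R'`, `W'`
or `V'` according to whether the induced subgraph on `{x,z,u}` is `K_{1,2}`,
`K₂ + K₁` or `3K₁`. -/
def IsoregNonEdgeWith [Fintype V] [DecidableEq V] (G : SimpleGraph V)
    [DecidableRel G.Adj] (x z : V) (R' W' V' : ℕ) : Prop :=
  x ≠ z ∧ ¬ G.Adj x z ∧
  (∀ u, u ≠ x → u ≠ z → G.Adj u x → G.Adj u z → commonValency G x z u = R') ∧
  (∀ u, u ≠ x → u ≠ z → Xor' (G.Adj u x) (G.Adj u z) → commonValency G x z u = W') ∧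
  (∀ u, u ≠ x → u ≠ z → ¬ G.Adj u x → ¬ G.Adj u z → commonValency G x z u = V')

lemma card_nf_inter [Fintype V] [DecidableEq V] (G : SimpleGraph V) [DecidableRel G.Adj]
    (v w : V) :
    #(G.neighborFinset v ∩ G.neighborFinset w) = Fintype.card (G.commonNeighbors v w) := by
  rw [← Set.toFinset_card]
  congr 1
  ext u
  simp [SimpleGraph.mem_commonNeighbors]

/-- For a 3-isoregular edge `(x,y)` of an `(n,k,λ,μ)`-strongly
regular graph with associated parameters `Q,R,W`, we have
`λμ(k-2λ+Q) = W(k-μ)(k-λ-1)`. -/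
theorem isoreg_edge_eq2 [Fintype V] [DecidableEq V] (G : SimpleGraph V)
    [DecidableRel G.Adj] (n k lam mu : ℕ) (h : G.IsSRGWith n k lam mu)
    (x y : V) (Q R W : ℕ) (hxy : IsoregEdgeWith G x y Q R W) :
    (lam : ℤ) * mu * (k - 2 * lam + Q) = W * (k - mu) * (k - lam - 1) := by
  obtain ⟨hadj, hQ, hR, hW⟩ := hxy
  have hdeg : ∀ v : V, #(G.neighborFinset v) = k := fun v => by
    rw [SimpleGraph.card_neighborFinset_eq_degree]; exact h.regular v
  have hD11 : #(G.neighborFinset x ∩ G.neighborFinset y) = lam := by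
    rw [card_nf_inter]; exact h.of_adj x y hadj
  have hUnion : #(G.neighborFinset x ∪ G.neighborFinset y) + lam = 2 * k := by
    have h1 := Finset.card_union_add_card_inter (G.neighborFinset x) (G.neighborFinset y)
    rw [hD11, hdeg, hdeg] at h1
    omega
  have hD22n : #(G.neighborFinset x ∪ G.neighborFinset y) +
      #((G.neighborFinset x ∪ G.neighborFinset y)ᶜ) = n := by
    rw [Finset.card_add_card_compl, h.card]
  have hD22mem : ∀ z ∈ (G.neighborFinset x ∪ G.neighborFinset y)ᶜ,
      z ≠ x ∧ z ≠ y ∧ ¬ G.Adj z x ∧ ¬ G.Adj z y := by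
    intro z hz
    rw [Finset.mem_compl, Finset.mem_union, SimpleGraph.mem_neighborFinset,
      SimpleGraph.mem_neighborFinset] at hz
    push_neg at hz
    have hzx : ¬ G.Adj z x := fun hc => hz.1 hc.symm
    have hzy : ¬ G.Adj z y := fun hc => hz.2 hc.symm
    refine ⟨?_, ?_, hzx, hzy⟩
    · rintro rfl; exact hzy hadj
    · rintro rfl; exact hzx hadj.symm
  have htermW : ∀ z ∈ (G.neighborFinset x ∪ G.neighborFinset y)ᶜ,
      #((G.neighborFinset x ∩ G.neighborFinset y).filter (fun w => G.Adj z w)) = W := by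
    intro z hz
    obtain ⟨hzx, hzy, hax, hay⟩ := hD22mem z hz
    have heq : (G.neighborFinset x ∩ G.neighborFinset y).filter (fun w => G.Adj z w) =
        G.neighborFinset x ∩ G.neighborFinset y ∩ G.neighborFinset z := by
      ext u
      simp only [Finset.mem_filter, Finset.mem_inter, SimpleGraph.mem_neighborFinset]
    rw [heq]
    exact hW z hzx hzy hax hay
  have htermQ : ∀ w ∈ G.neighborFinset x ∩ G.neighborFinset y,
      #(((G.neighborFinset x ∪ G.neighborFinset y)ᶜ).filter (fun z => G.Adj w z)) + 2 * lam
        = k + Q := by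
    intro w hw
    rw [Finset.mem_inter, SimpleGraph.mem_neighborFinset, SimpleGraph.mem_neighborFinset] at hw
    obtain ⟨hwx, hwy⟩ := hw
    have e1 : #((G.neighborFinset w).filter
          (fun z => z ∈ G.neighborFinset x ∪ G.neighborFinset y)) +
        #((G.neighborFinset w).filter
          (fun z => ¬ z ∈ G.neighborFinset x ∪ G.neighborFinset y)) = #(G.neighborFinset w) :=
      Finset.card_filter_add_card_filter_not _
    have e2 : (G.neighborFinset w).filter
          (fun z => ¬ z ∈ G.neighborFinset x ∪ G.neighborFinset y) =
        ((G.neighborFinset x ∪ G.neighborFinset y)ᶜ).filter (fun z => G.Adj w z) := by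
      ext u
      simp only [Finset.mem_filter, Finset.mem_compl, SimpleGraph.mem_neighborFinset]
      tauto
    have e3 : (G.neighborFinset w).filter
          (fun z => z ∈ G.neighborFinset x ∪ G.neighborFinset y) =
        (G.neighborFinset w ∩ G.neighborFinset x) ∪
          (G.neighborFinset w ∩ G.neighborFinset y) := by
      ext u
      simp only [Finset.mem_filter, Finset.mem_union, Finset.mem_inter]
      tauto
    have e4 := Finset.card_union_add_card_inter (G.neighborFinset w ∩ G.neighborFinset x)
      (G.neighborFinset w ∩ G.neighborFinset y)
    have e5 : #(G.neighborFinset w ∩ G.neighborFinset x) = lam := by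
      rw [card_nf_inter]; exact h.of_adj w x hwx.symm
    have e6 : #(G.neighborFinset w ∩ G.neighborFinset y) = lam := by
      rw [card_nf_inter]; exact h.of_adj w y hwy.symm
    have e7 : (G.neighborFinset w ∩ G.neighborFinset x) ∩
          (G.neighborFinset w ∩ G.neighborFinset y) =
        G.neighborFinset x ∩ G.neighborFinset y ∩ G.neighborFinset w := by
      ext u
      simp only [Finset.mem_inter]
      tauto
    have e8 : #(G.neighborFinset x ∩ G.neighborFinset y ∩ G.neighborFinset w) = Q :=
      hQ w hwx.ne' hwy.ne' hwx.symm hwy.symm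
    rw [e2, e3] at e1
    rw [e7, e8, e5, e6] at e4
    rw [hdeg w] at e1
    omega
  have hdc : ∑ z ∈ (G.neighborFinset x ∪ G.neighborFinset y)ᶜ,
        #((G.neighborFinset x ∩ G.neighborFinset y).filter (fun w => G.Adj z w)) =
      ∑ w ∈ G.neighborFinset x ∩ G.neighborFinset y,
        #(((G.neighborFinset x ∪ G.neighborFinset y)ᶜ).filter (fun z => G.Adj w z)) := by
    simp_rw [Finset.card_filter]
    rw [Finset.sum_comm]
    refine Finset.sum_congr rfl fun w _ => Finset.sum_congr rfl fun z _ => ?_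
    by_cases hc : G.Adj z w
    · simp [hc, hc.symm]
    · have hc2 : ¬ G.Adj w z := fun h2 => hc h2.symm
      simp [hc, hc2]
  have hL : ∑ z ∈ (G.neighborFinset x ∪ G.neighborFinset y)ᶜ,
        #((G.neighborFinset x ∩ G.neighborFinset y).filter (fun w => G.Adj z w)) =
      #((G.neighborFinset x ∪ G.neighborFinset y)ᶜ) * W := by
    rw [Finset.sum_congr rfl htermW, Finset.sum_const, smul_eq_mul]
  have hR' : (∑ w ∈ G.neighborFinset x ∩ G.neighborFinset y,
        (#(((G.neighborFinset x ∪ G.neighborFinset y)ᶜ).filter (fun z => G.Adj w z)) : ℤ)) =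
      lam * ((k : ℤ) + Q - 2 * lam) := by
    have hconst : ∀ w ∈ G.neighborFinset x ∩ G.neighborFinset y,
        (#(((G.neighborFinset x ∪ G.neighborFinset y)ᶜ).filter (fun z => G.Adj w z)) : ℤ) =
          (k : ℤ) + Q - 2 * lam := by
      intro w hw
      have := htermQ w hw
      omega
    rw [Finset.sum_congr rfl hconst, Finset.sum_const, nsmul_eq_mul, hD11]
  have key : (#((G.neighborFinset x ∪ G.neighborFinset y)ᶜ) : ℤ) * W =
      lam * ((k : ℤ) + Q - 2 * lam) := by
    rw [← hR', ← Nat.cast_sum, ← hdc, hL]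
    push_cast
    ring
  have hlamk : lam + 1 ≤ k := by
    have hsub : insert y (G.neighborFinset x ∩ G.neighborFinset y) ⊆ G.neighborFinset x := by
      intro u hu
      rcases Finset.mem_insert.mp hu with rfl | hu
      · rw [SimpleGraph.mem_neighborFinset]; exact hadj
      · exact Finset.inter_subset_left hu
    have hy : y ∉ G.neighborFinset x ∩ G.neighborFinset y := by
      rw [Finset.mem_inter, SimpleGraph.mem_neighborFinset, SimpleGraph.mem_neighborFinset]
      rintro ⟨-, hc⟩; exact G.loopless.irrefl y hc
    have hcard := Finset.card_le_card hsub
    rw [Finset.card_insert_of_notMem hy, hD11, hdeg] at hcard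
    omega
  have hkn : k + 1 ≤ n := by
    have hy : y ∉ G.neighborFinset y := by
      rw [SimpleGraph.mem_neighborFinset]; exact G.loopless.irrefl y
    have hcard := Finset.card_le_card (Finset.subset_univ (insert y (G.neighborFinset y)))
    rw [Finset.card_insert_of_notMem hy, hdeg, Finset.card_univ, h.card] at hcard
    omega
  have hp := SimpleGraph.IsSRGWith.param_eq G h (by omega)
  have a1 : lam ≤ k := by omega
  have a2 : 1 ≤ k - lam := by omega
  have a3 : k ≤ n := by omega
  have a4 : 1 ≤ n - k := by omega
  have hpz : (k : ℤ) * ((k : ℤ) - lam - 1) = ((n : ℤ) - k - 1) * mu := by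
    zify [a1, a2, a3, a4] at hp
    linarith [hp]
  have hC : (#((G.neighborFinset x ∪ G.neighborFinset y)ᶜ) : ℤ) = (n : ℤ) - 2 * k + lam := by
    omega
  rw [hC] at key
  linear_combination (-(mu : ℤ)) * key - (W : ℤ) * hpz
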